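/- arXiv:0912.4613 — 4 statements merged into one kernel-verified Lean document; each statement's English description precedes it below -/
import Mathlib

section
/- If C is a complete order on a finite set of n ≥ 2 vertices, then there exist n-1 pairwise arc-disjoint directed paths from the transmitter to the receiver; that is, there is a family of n-1 directed paths, each starting at the least vertex and ending at the greatest vertex, such that no two distinct paths in the family use a common arc. -/
/-- The arcs of a directed path given as a list of vertices: the consecutive pairs. -/
def pathArcs {V : Type*} (l : List V) : List (V × V) := l.zip l.tail

/-- A directed path in the complete order from `t` to `r`: a nonempty list of vertices,
consecutive ones joined by an arc (`<`), starting at `t` and ending at `r`. -/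
def IsTRPath {V : Type*} [LT V] (t r : V) (l : List V) : Prop :=
  l ≠ [] ∧ l.Chain' (· < ·) ∧ l.head? = some t ∧ l.getLast? = some r

/-- A family of paths is pairwise arc-disjoint: no two distinct members share an arc. -/
def ArcDisjoint {V : Type*} {k : ℕ} (P : Fin k → List V) : Prop :=
  ∀ i j, i ≠ j → ∀ e ∈ pathArcs (P i), e ∉ pathArcs (P j)

/-- In a complete order on `n ≥ 2` vertices there exist `n - 1` pairwise
arc-disjoint directed paths from the transmitter (the least vertex `t`) to the receiver
(the greatest vertex `r`). -/
theorem complete_order_exists_arc_disjoint_paths {V : Type*} [Fintype V] [LinearOrder V]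
    (n : ℕ) (hn : 2 ≤ n) (hcard : Fintype.card V = n)
    (t r : V) (ht : ∀ x : V, t ≤ x) (hr : ∀ x : V, x ≤ r) :
    ∃ P : Fin (n - 1) → List V, (∀ i, IsTRPath t r (P i)) ∧ ArcDisjoint P := by
  classical
  have htne : t ≠ r := by
    intro h
    have h1 : Fintype.card V ≤ 1 := Fintype.card_le_one_iff.2 (fun a b => by
      have ha : a = t := le_antisymm (h ▸ hr a) (ht a)
      have hb : b = t := le_antisymm (h ▸ hr b) (ht b)
      rw [ha, hb])
    omega
  have htr : t < r := lt_of_le_of_ne (ht r) htne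
  set S : Finset V := Finset.univ \ {t, r} with hS
  have hScard : S.card = n - 2 := by
    rw [hS, Finset.card_sdiff_of_subset (Finset.subset_univ _), Finset.card_univ, hcard]
    rw [Finset.card_insert_of_notMem (by simp [htne]), Finset.card_singleton]
  set L : List V := S.toList with hL
  have hlen : L.length = n - 2 := by rw [hL, Finset.length_toList, hScard]
  have hnodup : L.Nodup := S.nodup_toList
  have hget : ∀ k (h : k < L.length), t < L[k] ∧ L[k] < r := by
    intro k h
    have hm : L[k] ∈ S := by
      rw [← Finset.mem_toList]; exact List.getElem_mem h
    rw [hS, Finset.mem_sdiff, Finset.mem_insert, Finset.mem_singleton] at hm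
    push_neg at hm
    exact ⟨lt_of_le_of_ne (ht _) (Ne.symm hm.2.1), lt_of_le_of_ne (hr _) hm.2.2⟩
  refine ⟨fun i => if h : (i : ℕ) < L.length then [t, L[(i : ℕ)], r] else [t, r], ?_, ?_⟩
  · intro i
    by_cases h : (i : ℕ) < L.length
    · simp only [dif_pos h]
      obtain ⟨h1, h2⟩ := hget i h
      exact ⟨by simp, by simp [List.Chain', h1, h2], by simp, by simp [List.getLast?]⟩
    · simp only [dif_neg h]
      exact ⟨by simp, by simp [List.Chain', htr], by simp, by simp [List.getLast?]⟩
  · intro i j hij e hei hej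
    by_cases hi : (i : ℕ) < L.length
    · by_cases hj : (j : ℕ) < L.length
      · set vi := L.get ⟨i, hi⟩ with hvi
        set vj := L.get ⟨j, hj⟩ with hvj
        have hvne : vi ≠ vj := by
          intro h
          apply hij
          have := (List.Nodup.get_inj_iff hnodup).1 h
          exact Fin.ext (by simpa using congrArg Fin.val this)
        simp only [dif_pos hi] at hei
        simp only [dif_pos hj] at hej
        simp only [pathArcs, List.zip, List.zipWith, List.tail_cons, List.mem_cons, List.not_mem_nil,
          or_false, Prod.mk.injEq] at hei hej
        obtain ⟨hti, hir⟩ := hget i hi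
        obtain ⟨htj, hjr⟩ := hget j hj
        rcases hei with he | he <;> rcases hej with h2 | h2 <;>
          rw [he, Prod.mk.injEq] at h2
        · exact hvne h2.2
        · exact absurd h2.2 (ne_of_lt hir)
        · exact absurd h2.1 (ne_of_gt hti)
        · exact hvne h2.1
      · simp only [dif_pos hi] at hei
        simp only [dif_neg hj] at hej
        obtain ⟨hti, hir⟩ := hget i hi
        simp only [pathArcs, List.zip, List.zipWith, List.tail_cons, List.mem_cons, List.not_mem_nil,
          or_false, Prod.mk.injEq] at hei hej
        rcases hei with he | he <;> rw [he, Prod.mk.injEq] at hej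
        · exact absurd hej.2 (ne_of_lt hir)
        · exact absurd hej.1 (ne_of_lt hti).symm
    · by_cases hj : (j : ℕ) < L.length
      · simp only [dif_neg hi] at hei
        simp only [dif_pos hj] at hej
        obtain ⟨htj, hjr⟩ := hget j hj
        simp only [pathArcs, List.zip, List.zipWith, List.tail_cons, List.mem_cons, List.not_mem_nil,
          or_false, Prod.mk.injEq] at hei hej
        rw [hei] at hej
        simp only [Prod.mk.injEq] at hej
        rcases hej with he | he
        · exact absurd he.2 (ne_of_gt hjr)
        · exact absurd he.1 (ne_of_lt htj)
      · apply hij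
        have hi' := i.isLt
        have hj' := j.isLt
        rw [hlen] at hi hj
        exact Fin.ext (by omega)
end

section
/- In a complete order on a finite set of n ≥ 2 vertices, any family of pairwise arc-disjoint directed paths from the transmitter to the receiver has at most n-1 members; hence n-1 is the maximum possible number of arc-disjoint paths from transmitter to receiver. -/
lemma path_shape {V : Type*} [LinearOrder V] {t r : V} {l : List V}
    (h : IsTRPath t r l) (htr : t ≠ r) : ∃ x l', l = t :: x :: l' ∧ t < x := by
  obtain ⟨hne, hchain, hhead, hlast⟩ := h
  match l, hne with
  | [a], _ =>
      simp at hhead hlast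
      exact absurd (hhead.symm.trans hlast) htr
  | a :: b :: l', _ =>
      simp at hhead
      subst hhead
      exact ⟨b, l', rfl, (List.isChain_cons_cons.mp hchain).1⟩

/-- In a complete order on `n ≥ 2` vertices, any family of pairwise
arc-disjoint directed paths from the transmitter `t` to the receiver `r` has at most
`n - 1` members; hence `n - 1` is the maximum possible number of arc-disjoint paths
from transmitter to receiver. -/
theorem complete_order_arc_disjoint_paths_bound {V : Type*} [Fintype V] [LinearOrder V]
    (n : ℕ) (hn : 2 ≤ n) (hcard : Fintype.card V = n)
    (t r : V) (ht : ∀ x : V, t ≤ x) (hr : ∀ x : V, x ≤ r) :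
    (∀ (k : ℕ) (P : Fin k → List V),
        (∀ i, IsTRPath t r (P i)) → ArcDisjoint P → k ≤ n - 1) ∧
    IsGreatest {k : ℕ | ∃ P : Fin k → List V, (∀ i, IsTRPath t r (P i)) ∧ ArcDisjoint P}
      (n - 1) := by
  have htr : t < r := by
    obtain ⟨x, y, hxy⟩ := Fintype.exists_pair_of_one_lt_card (by omega : 1 < Fintype.card V)
    rcases eq_or_lt_of_le (ht r) with h | h
    · exact absurd (le_antisymm (le_trans (h ▸ hr x) (ht y))
        (le_trans (h ▸ hr y) (ht x)) : x = y) hxy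
    · exact h
  have bound : ∀ (k : ℕ) (P : Fin k → List V),
      (∀ i, IsTRPath t r (P i)) → ArcDisjoint P → k ≤ n - 1 := by
    intro k P hP hD
    have hex : ∀ i, ∃ x, (t, x) ∈ pathArcs (P i) ∧ t < x := by
      intro i
      obtain ⟨x, l', hl, hx⟩ := path_shape (hP i) htr.ne
      refine ⟨x, ?_, hx⟩
      rw [hl]
      simp [pathArcs]
    choose f hf hf' using hex
    have hinj : Set.InjOn f (Finset.univ : Finset (Fin k)) := by
      intro i _ j _ hij
      by_contra hne
      exact hD i j hne (t, f i) (hf i) (by rw [hij]; exact hf j)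
    have hmem : ∀ i ∈ (Finset.univ : Finset (Fin k)), f i ∈ Finset.univ.erase t := by
      intro i _
      exact Finset.mem_erase.mpr ⟨(hf' i).ne', Finset.mem_univ _⟩
    have := Finset.card_le_card_of_injOn f hmem hinj
    simpa [Finset.card_erase_of_mem, hcard] using this
  refine ⟨bound, ⟨?_, fun k ⟨P, h1, h2⟩ => bound k P h1 h2⟩⟩
  -- existence: n - 1 arc-disjoint paths
  have hcs : Fintype.card {x : V // x ≠ r} = n - 1 := by
    rw [Fintype.card_subtype_compl, hcard]
    simp
  obtain ⟨e⟩ : Nonempty (Fin (n - 1) ≃ {x : V // x ≠ r}) :=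
    ⟨(Fintype.equivFinOfCardEq hcs).symm⟩
  refine ⟨fun i => if (e i : V) = t then [t, r] else [t, (e i : V), r], fun i => ?_, ?_⟩
  · by_cases h : (e i : V) = t
    · simpa [IsTRPath, h, List.Chain', List.isChain_cons_cons] using htr
    · have h1 : t < (e i : V) := lt_of_le_of_ne (ht _) (Ne.symm h)
      have h2 : (e i : V) < r := lt_of_le_of_ne (hr _) (e i).2
      simp [IsTRPath, h, h1, h2, List.Chain', List.isChain_cons_cons]
  · intro i j hij a ha hb
    have hij' : (e i : V) ≠ (e j : V) := fun h =>
      hij (e.injective (Subtype.ext h))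
    by_cases h1 : (e i : V) = t <;> by_cases h2 : (e j : V) = t <;>
      simp [h1, h2, pathArcs] at ha hb
    · exact hij' (h1.trans h2.symm)
    · subst ha
      simp only [Prod.mk.injEq] at hb
      rcases hb with ⟨-, h⟩ | ⟨h, -⟩
      · exact (e j).2 h.symm
      · exact h2 h.symm
    · subst hb
      simp only [Prod.mk.injEq] at ha
      rcases ha with ⟨-, h⟩ | ⟨h, -⟩
      · exact (e i).2 h.symm
      · exact h1 h.symm
    · rcases ha with ha | ha <;> subst ha <;>
        simp only [Prod.mk.injEq] at hb <;>
        rcases hb with ⟨ha, hb⟩ | ⟨ha, hb⟩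
      · exact hij' hb
      · exact h2 ha.symm
      · exact h1 ha
      · exact hij' ha
end

section
/- If C is a complete order on a finite set of n ≥ 2 vertices, then any family of n-1 pairwise arc-disjoint directed paths from the transmitter to the receiver uses exactly 2n-3 arcs in total; that is, the union of the arc sets of the n-1 paths has cardinality 2n-3. -/
lemma pathArcs_cons_cons {V : Type*} (x y : V) (l : List V) :
    pathArcs (x :: y :: l) = (x, y) :: pathArcs (y :: l) := rfl

lemma mem_of_mem_pathArcs {V : Type*} {a b : V} {l : List V}
    (h : (a, b) ∈ pathArcs l) : a ∈ l ∧ b ∈ l.tail :=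
  List.of_mem_zip h

lemma lt_of_mem_pathArcs {V : Type*} [Preorder V] :
    ∀ {l : List V}, l.Chain' (· < ·) → ∀ {a b : V}, (a, b) ∈ pathArcs l → a < b
  | [], _, _, _, h => by simp [pathArcs] at h
  | [x], _, _, _, h => by simp [pathArcs] at h
  | x :: y :: l, hc, a, b, h => by
    rw [pathArcs_cons_cons, List.mem_cons] at h
    rcases h with h | h
    · obtain ⟨rfl, rfl⟩ := Prod.mk.injEq .. ▸ h
      exact (List.isChain_cons_cons.mp hc).1
    · exact lt_of_mem_pathArcs (List.isChain_cons_cons.mp hc).2 h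

lemma exists_next {V : Type*} {r b : V} :
    ∀ {l : List V}, l.getLast? = some r → b ∈ l → b ≠ r → ∃ c, (b, c) ∈ pathArcs l
  | [], h, hb, _ => by simp at hb
  | [x], h, hb, hbr => by
    simp_all
  | x :: y :: l, h, hb, hbr => by
    rcases List.mem_cons.mp hb with rfl | hb
    · exact ⟨y, by simp [pathArcs_cons_cons]⟩
    · obtain ⟨c, hc⟩ := exists_next (l := y :: l) (by
        rwa [List.getLast?_cons_cons] at h) hb hbr
      rw [pathArcs_cons_cons]
      exact ⟨c, List.mem_cons_of_mem _ hc⟩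

lemma exists_first_arc {V : Type*} {t : V} :
    ∀ {l : List V}, 2 ≤ l.length → l.head? = some t → ∃ b, (t, b) ∈ pathArcs l
  | [], h, _ => by simp at h
  | [x], h, _ => by simp at h
  | x :: y :: l, _, hh => ⟨y, by simp at hh; simp [pathArcs_cons_cons, hh]⟩

lemma exists_last_arc {V : Type*} {r : V} :
    ∀ {l : List V}, 2 ≤ l.length → l.getLast? = some r → ∃ a, (a, r) ∈ pathArcs l
  | [], h, _ => by simp at h
  | [x], h, _ => by simp at h
  | [x, y], _, hl => ⟨x, by simp at hl; simp [pathArcs_cons_cons, hl]⟩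
  | x :: y :: z :: l, _, hl => by
    obtain ⟨a, ha⟩ := exists_last_arc (l := y :: z :: l) (by simp) (by
      rwa [List.getLast?_cons_cons] at hl)
    rw [pathArcs_cons_cons]
    exact ⟨a, List.mem_cons_of_mem _ ha⟩

lemma in_arc_unique {V : Type*} [LinearOrder V] :
    ∀ {l : List V}, l.Chain' (· < ·) → ∀ {a a' b : V},
      (a, b) ∈ pathArcs l → (a', b) ∈ pathArcs l → a = a'
  | [], _, _, _, _, h, _ => by simp [pathArcs] at h
  | [x], _, _, _, _, h, _ => by simp [pathArcs] at h
  | x :: y :: l, hc, a, a', b, h, h' => by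
    have hc' := List.isChain_cons_cons.mp hc
    rw [pathArcs_cons_cons, List.mem_cons] at h h'
    have hy : ∀ {u : V}, (u, b) ∈ pathArcs (y :: l) → y < b := by
      intro u hu
      have hmem := (mem_of_mem_pathArcs hu).2
      have hpw := (List.isChain_iff_pairwise.mp hc'.2)
      exact List.rel_of_pairwise_cons hpw hmem
    rcases h with h | h <;> rcases h' with h' | h'
    · obtain ⟨rfl, rfl⟩ := Prod.mk.injEq .. ▸ h
      obtain ⟨rfl, -⟩ := Prod.mk.injEq .. ▸ h'
      rfl
    · obtain ⟨rfl, rfl⟩ := Prod.mk.injEq .. ▸ h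
      exact absurd (hy h') (lt_irrefl _)
    · obtain ⟨rfl, rfl⟩ := Prod.mk.injEq .. ▸ h'
      exact absurd (hy h) (lt_irrefl _)
    · exact in_arc_unique hc'.2 h h'


/-- In a complete order on `n ≥ 2` vertices, any family of `n - 1`
pairwise arc-disjoint directed paths from the transmitter `t` to the receiver `r`
uses exactly `2n - 3` arcs in total: the union of the arc sets of the paths has
cardinality `2n - 3`. -/
theorem complete_order_arc_disjoint_paths_used_arcs {V : Type*} [Fintype V] [LinearOrder V]
    (n : ℕ) (hn : 2 ≤ n) (hcard : Fintype.card V = n)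
    (t r : V) (ht : ∀ x : V, t ≤ x) (hr : ∀ x : V, x ≤ r)
    (P : Fin (n - 1) → List V) (hP : ∀ i, IsTRPath t r (P i)) (hdisj : ArcDisjoint P) :
    (Finset.univ.biUnion (fun i => (pathArcs (P i)).toFinset)).card = 2 * n - 3 := by
  classical
  have htr : t < r := by
    obtain ⟨x, hx⟩ := Fintype.exists_ne_of_one_lt_card (by omega : 1 < Fintype.card V) t
    exact lt_of_lt_of_le (lt_of_le_of_ne (ht x) (Ne.symm hx)) (hr x)
  have hlen : ∀ i, 2 ≤ (P i).length := by
    intro i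
    obtain ⟨hne, hc, hh, hl⟩ := hP i
    rcases hPi : (P i) with _ | ⟨x, _ | ⟨y, l⟩⟩ <;> rw [hPi] at hh hl
    · exact absurd hPi hne
    · simp at hh hl
      exact absurd (hh.symm.trans hl) htr.ne
    · simp
  choose f hf using fun i => exists_first_arc (hlen i) (hP i).2.2.1
  choose g hg using fun i => exists_last_arc (hlen i) (hP i).2.2.2
  have hfinj : Function.Injective f := by
    intro i j hij
    by_contra hne
    exact hdisj i j hne _ (hf i) (hij ▸ hf j)
  have hginj : Function.Injective g := by
    intro i j hij
    by_contra hne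
    exact hdisj i j hne _ (hg i) (hij ▸ hg j)
  have hcardFin : Fintype.card (Fin (n - 1)) = n - 1 := by simp
  have hfsurj : ∀ b : V, b ≠ t → ∃ i, f i = b := by
    have hsub : Finset.univ.image f ⊆ Finset.univ.erase t := by
      intro b hb
      simp only [Finset.mem_image] at hb
      obtain ⟨i, -, rfl⟩ := hb
      exact Finset.mem_erase.mpr
        ⟨(lt_of_mem_pathArcs (hP i).2.1 (hf i)).ne', Finset.mem_univ _⟩
    have heq : Finset.univ.image f = Finset.univ.erase t := by
      apply Finset.eq_of_subset_of_card_le hsub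
      rw [Finset.card_erase_of_mem (Finset.mem_univ t),
        Finset.card_image_of_injective _ hfinj, Finset.card_univ, Finset.card_univ,
        hcardFin, hcard]
    intro b hb
    have : b ∈ Finset.univ.image f := heq ▸ Finset.mem_erase.mpr ⟨hb, Finset.mem_univ _⟩
    simpa using this
  have hgsurj : ∀ a : V, a ≠ r → ∃ i, g i = a := by
    have hsub : Finset.univ.image g ⊆ Finset.univ.erase r := by
      intro a ha
      simp only [Finset.mem_image] at ha
      obtain ⟨i, -, rfl⟩ := ha
      exact Finset.mem_erase.mpr
        ⟨(lt_of_mem_pathArcs (hP i).2.1 (hg i)).ne, Finset.mem_univ _⟩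
    have heq : Finset.univ.image g = Finset.univ.erase r := by
      apply Finset.eq_of_subset_of_card_le hsub
      rw [Finset.card_erase_of_mem (Finset.mem_univ r),
        Finset.card_image_of_injective _ hginj, Finset.card_univ, Finset.card_univ,
        hcardFin, hcard]
    intro a ha
    have : a ∈ Finset.univ.image g := heq ▸ Finset.mem_erase.mpr ⟨ha, Finset.mem_univ _⟩
    simpa using this
  -- key claim: every used arc has source t or target r
  have key : ∀ i a b, (a, b) ∈ pathArcs (P i) → a = t ∨ b = r := by
    by_contra hbad
    push_neg at hbad
    obtain ⟨i0, a0, b0, hmem0, hat0, hbr0⟩ := hbad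
    set S : Finset V := Finset.univ.filter
      (fun b => ∃ i a, (a, b) ∈ pathArcs (P i) ∧ a ≠ t ∧ b ≠ r) with hS
    have hSne : S.Nonempty := ⟨b0, by
      simp only [hS, Finset.mem_filter, Finset.mem_univ, true_and]
      exact ⟨i0, a0, hmem0, hat0, hbr0⟩⟩
    obtain ⟨b, hbS, hbmax⟩ := S.exists_max_image id hSne
    simp only [hS, Finset.mem_filter, Finset.mem_univ, true_and] at hbS
    obtain ⟨i, a, hab, hat, hbr⟩ := hbS
    have hmaxprop : ∀ i' a' c, (a', c) ∈ pathArcs (P i') → a' ≠ t → c ≠ r → c ≤ b := by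
      intro i' a' c h1 h2 h3
      have hc : c ∈ S := by
        simp only [hS, Finset.mem_filter, Finset.mem_univ, true_and]
        exact ⟨i', a', h1, h2, h3⟩
      exact hbmax c hc
    have hb_lt := lt_of_mem_pathArcs (hP i).2.1 hab
    have hta : t < a := lt_of_le_of_ne (ht a) (Ne.symm hat)
    have hbt : b ≠ t := (hta.trans hb_lt).ne'
    obtain ⟨c, hc⟩ := exists_next (hP i).2.2.2
      (List.mem_of_mem_tail (mem_of_mem_pathArcs hab).2) hbr
    have hcr : c = r := by
      by_contra hcr
      exact absurd (lt_of_mem_pathArcs (hP i).2.1 hc)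
        (not_lt.mpr (hmaxprop i b c hc hbt hcr))
    subst hcr
    obtain ⟨j, hj⟩ := hfsurj b hbt
    have hjt : (t, b) ∈ pathArcs (P j) := hj ▸ hf j
    have hij : j ≠ i := by
      rintro rfl
      exact hat (in_arc_unique (hP j).2.1 hab hjt)
    obtain ⟨c', hc'⟩ := exists_next (hP j).2.2.2
      (List.mem_of_mem_tail (mem_of_mem_pathArcs hjt).2) hbr
    have hc'r : c' ≠ c := by
      rintro rfl
      exact hdisj j i hij _ hc' hc
    exact absurd (lt_of_mem_pathArcs (hP j).2.1 hc')
      (not_lt.mpr (hmaxprop j b c' hc' hbt hc'r))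
  -- identify the union
  have hunion : Finset.univ.biUnion (fun i => (pathArcs (P i)).toFinset)
      = (Finset.univ.erase t).image (fun b => (t, b))
        ∪ (Finset.univ.erase r).image (fun a => (a, r)) := by
    ext e
    obtain ⟨a, b⟩ := e
    simp only [Finset.mem_biUnion, Finset.mem_univ, true_and, and_true, List.mem_toFinset,
      Finset.mem_union, Finset.mem_image, Finset.mem_erase, Prod.mk.injEq]
    constructor
    · rintro ⟨i, hi⟩
      have hlt := lt_of_mem_pathArcs (hP i).2.1 hi
      rcases key i a b hi with rfl | rfl
      · exact Or.inl ⟨b, hlt.ne', rfl, rfl⟩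
      · exact Or.inr ⟨a, hlt.ne, rfl, rfl⟩
    · rintro (⟨b', hbt, rfl, rfl⟩ | ⟨a', har, rfl, rfl⟩)
      · obtain ⟨i, rfl⟩ := hfsurj b' hbt
        exact ⟨i, hf i⟩
      · obtain ⟨i, rfl⟩ := hgsurj a' har
        exact ⟨i, hg i⟩
  rw [hunion]
  have hinjt : Function.Injective (fun b : V => (t, b)) :=
    fun x y h => congrArg Prod.snd h
  have hinjr : Function.Injective (fun a : V => (a, r)) :=
    fun x y h => congrArg Prod.fst h
  have h1 : ((Finset.univ.erase t).image (fun b => (t, b))).card = n - 1 := by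
    rw [Finset.card_image_of_injective _ hinjt,
      Finset.card_erase_of_mem (Finset.mem_univ t), Finset.card_univ, hcard]
  have h2 : ((Finset.univ.erase r).image (fun a => (a, r))).card = n - 1 := by
    rw [Finset.card_image_of_injective _ hinjr,
      Finset.card_erase_of_mem (Finset.mem_univ r), Finset.card_univ, hcard]
  have hint : (Finset.univ.erase t).image (fun b => (t, b))
      ∩ (Finset.univ.erase r).image (fun a => (a, r)) = {(t, r)} := by
    ext e
    obtain ⟨a, b⟩ := e
    simp only [Finset.mem_inter, Finset.mem_image, Finset.mem_erase, Finset.mem_univ,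
      and_true, Finset.mem_singleton, Prod.mk.injEq]
    constructor
    · rintro ⟨⟨b', hbt, he1⟩, ⟨a', har, he2⟩⟩
      exact ⟨he1.1.symm, he2.2.symm⟩
    · rintro ⟨rfl, rfl⟩
      exact ⟨⟨_, htr.ne', rfl, rfl⟩, ⟨_, htr.ne, rfl, rfl⟩⟩
  have hcu := Finset.card_union_add_card_inter
    ((Finset.univ.erase t).image (fun b => (t, b)))
    ((Finset.univ.erase r).image (fun a => (a, r)))
  rw [hint, h1, h2, Finset.card_singleton] at hcu
  omega
end

section
/- If C is a complete order on a finite set of n ≥ 2 vertices, then for any family of n-1 pairwise arc-disjoint directed paths from the transmitter to the receiver, exactly (n-2)(n-3)/2 arcs of C are not used by any path of the family; that is, the cardinality of the set of arcs of C not belonging to the union of the arc sets of the paths equals (n-2)(n-3)/2. -/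
lemma map_snd_pathArcs {V : Type*} (l : List V) : (pathArcs l).map Prod.snd = l.tail :=
  List.map_snd_zip (by cases l <;> simp)

lemma map_fst_pathArcs {V : Type*} (l : List V) : (pathArcs l).map Prod.fst = l.dropLast := by
  induction l with
  | nil => rfl
  | cons a l ih =>
    cases l with
    | nil => rfl
    | cons b tl => simpa [pathArcs] using ih

lemma rel_of_mem_pathArcs {V : Type*} {R : V → V → Prop} {l : List V} (h : l.Chain' R)
    {p : V × V} (hp : p ∈ pathArcs l) : R p.1 p.2 := by
  induction l with
  | nil => simp [pathArcs] at hp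
  | cons a l ih =>
    cases l with
    | nil => simp [pathArcs] at hp
    | cons b tl =>
      rcases List.isChain_cons_cons.mp h with ⟨hab, h'⟩
      have hp' : p = (a, b) ∨ p ∈ pathArcs (b :: tl) := List.mem_cons.mp hp
      rcases hp' with hp' | hp'
      · subst hp'; exact hab
      · exact ih h' hp'

lemma nodup_pathArcs {V : Type*} {l : List V} (h : l.Nodup) : (pathArcs l).Nodup := by
  have := (h.sublist (List.dropLast_sublist l))
  rw [← map_fst_pathArcs] at this
  exact this.of_map _

lemma mem_pathArcs_append {V : Type*} (ys : List V) (a b : V) (tl : List V) :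
    (a, b) ∈ pathArcs (ys ++ a :: b :: tl) := by
  induction ys with
  | nil => simp [pathArcs]
  | cons y ys ih =>
    have hne : ys ++ a :: b :: tl ≠ [] := by simp
    rcases List.exists_cons_of_ne_nil hne with ⟨z, zz, hz⟩
    rw [List.cons_append, hz]
    rw [hz] at ih
    exact List.mem_cons_of_mem _ ih




lemma card_filter_snd {V : Type*} [DecidableEq V] {l : List V} (h : l.Nodup) (v : V) :
    ((pathArcs l).toFinset.filter (fun p => p.2 = v)).card = l.tail.count v := by
  classical
  have : (Finset.filter (fun p => p.2 = v) (pathArcs l).toFinset)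
      = ((pathArcs l).filter (fun p => p.2 == v)).toFinset := by
    ext p; simp [List.mem_filter]
  rw [this, List.toFinset_card_of_nodup ((nodup_pathArcs h).filter _),
    ← List.countP_eq_length_filter, ← map_snd_pathArcs l, List.count_eq_countP, List.countP_map]
  rfl

lemma card_filter_fst {V : Type*} [DecidableEq V] {l : List V} (h : l.Nodup) (v : V) :
    ((pathArcs l).toFinset.filter (fun p => p.1 = v)).card = l.dropLast.count v := by
  classical
  have : (Finset.filter (fun p => p.1 = v) (pathArcs l).toFinset)
      = ((pathArcs l).filter (fun p => p.1 == v)).toFinset := by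
    ext p; simp [List.mem_filter]
  rw [this, List.toFinset_card_of_nodup ((nodup_pathArcs h).filter _),
    ← List.countP_eq_length_filter, ← map_fst_pathArcs l, List.count_eq_countP, List.countP_map]
  rfl




lemma count_tail {V : Type*} [DecidableEq V] {l : List V} {t v : V}
    (hh : l.head? = some t) (hv : v ≠ t) : l.tail.count v = l.count v := by
  cases l with
  | nil => simp at hh
  | cons a l =>
    simp only [List.head?_cons, Option.some_inj] at hh
    subst hh
    simp [List.count_cons, hv, Ne.symm hv]

lemma count_dropLast {V : Type*} [DecidableEq V] {l : List V} {r v : V}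
    (hh : l.getLast? = some r) (hv : v ≠ r) : l.dropLast.count v = l.count v := by
  have hne : l ≠ [] := by rintro rfl; simp at hh
  have h2 : l.dropLast ++ [l.getLast hne] = l := List.dropLast_append_getLast hne
  have h3 : l.getLast hne = r := by
    rw [List.getLast?_eq_getLast hne] at hh; exact Option.some_inj.mp hh
  conv_rhs => rw [← h2]
  simp [List.count_append, h3, hv, Ne.symm hv]

-- first arc structure
lemma first_arc {V : Type*} {l : List V} {t r : V} (hh : l.head? = some t)
    (hl : l.getLast? = some r) (htr : t ≠ r) :
    (t, l.tail.head?.getD t) ∈ pathArcs l := by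
  cases l with
  | nil => simp at hh
  | cons a l =>
    simp only [List.head?_cons, Option.some_inj] at hh
    subst hh
    cases l with
    | nil =>
      simp only [List.getLast?_singleton, Option.some_inj] at hl
      exact absurd hl htr
    | cons b tl =>
      simpa using mem_pathArcs_append [] a b tl

-- last arc structure
lemma last_arc {V : Type*} {l : List V} {t r : V} (hh : l.head? = some t)
    (hl : l.getLast? = some r) (htr : t ≠ r) :
    (l.dropLast.getLast?.getD r, r) ∈ pathArcs l := by
  rcases List.eq_nil_or_concat l with rfl | ⟨ys, b, rfl⟩
  · simp at hh
  · simp only [List.concat_eq_append] at *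
    rw [List.getLast?_concat] at hl
    obtain rfl : b = r := Option.some_inj.mp hl
    rcases List.eq_nil_or_concat ys with rfl | ⟨zs, g, rfl⟩
    · simp only [List.nil_append, List.head?_cons, Option.some_inj] at hh
      exact absurd hh.symm htr
    · simp only [List.concat_eq_append] at *
      rw [List.dropLast_concat, List.getLast?_concat]
      simp only [Option.getD_some]
      rw [List.append_assoc]
      exact mem_pathArcs_append zs g b []

/-- In a complete order on `n ≥ 2` vertices, for any family of `n - 1`
pairwise arc-disjoint directed paths from the transmitter `t` to the receiver `r`,
exactly `(n-2)(n-3)/2` arcs of the complete order are not used by any path of the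
family. -/
theorem complete_order_arc_disjoint_paths_unused_arcs {V : Type*} [Fintype V] [LinearOrder V]
    (n : ℕ) (hn : 2 ≤ n) (hcard : Fintype.card V = n)
    (t r : V) (ht : ∀ x : V, t ≤ x) (hr : ∀ x : V, x ≤ r)
    (P : Fin (n - 1) → List V) (hP : ∀ i, IsTRPath t r (P i)) (hdisj : ArcDisjoint P) :
    ((Finset.univ.filter (fun p : V × V => p.1 < p.2)) \
        (Finset.univ.biUnion (fun i => (pathArcs (P i)).toFinset))).card
      = (n - 2) * (n - 3) / 2 := by
  classical
  set A : Finset (V × V) := Finset.univ.biUnion (fun i => (pathArcs (P i)).toFinset) with hA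
  -- basic path facts
  have hhead : ∀ i, (P i).head? = some t := fun i => (hP i).2.2.1
  have hlast : ∀ i, (P i).getLast? = some r := fun i => (hP i).2.2.2
  have hchain : ∀ i, (P i).Chain' (· < ·) := fun i => (hP i).2.1
  have hpair : ∀ i, (P i).Pairwise (· < ·) := fun i => List.isChain_iff_pairwise.mp (hchain i)
  have hnodup : ∀ i, (P i).Nodup := fun i => (hpair i).imp ne_of_lt
  have htr : t < r := by
    obtain ⟨x, y, hxy⟩ := Fintype.exists_pair_of_one_lt_card (by omega : 1 < Fintype.card V)
    rcases eq_or_ne x t with rfl | hx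
    · exact lt_of_le_of_ne (ht y) hxy |>.trans_le (hr y)
    · exact lt_of_le_of_ne (ht x) (Ne.symm hx) |>.trans_le (hr x)
  have htr' : t ≠ r := ne_of_lt htr
  have hlt : ∀ i, ∀ p ∈ pathArcs (P i), p.1 < p.2 := fun i p hp =>
    rel_of_mem_pathArcs (hchain i) hp
  have hAlt : ∀ p ∈ A, p.1 < p.2 := by
    intro p hp
    rw [hA, Finset.mem_biUnion] at hp
    obtain ⟨i, _, hi⟩ := hp
    exact hlt i p (List.mem_toFinset.mp hi)
  -- disjointness of arc finsets
  have hTdisj : ∀ i j : Fin (n - 1), i ≠ j →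
      Disjoint ((pathArcs (P i)).toFinset) ((pathArcs (P j)).toFinset) := by
    intro i j hij
    rw [Finset.disjoint_left]
    intro a ha hb
    exact hdisj i j hij a (List.mem_toFinset.mp ha) (List.mem_toFinset.mp hb)
  have key : ∀ (q : V × V → Prop) (_ : DecidablePred q),
      (A.filter q).card = ∑ i, ((pathArcs (P i)).toFinset.filter q).card := by
    intro q _
    rw [hA, Finset.filter_biUnion]
    exact Finset.card_biUnion (fun i _ j _ hij =>
      Finset.disjoint_filter_filter (hTdisj i j hij))
  -- surjectivity of first arcs
  have hcardFin : Fintype.card (Fin (n - 1)) = n - 1 := Fintype.card_fin _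
  have htA : ∀ v : V, v ≠ t → (t, v) ∈ A := by
    set f : Fin (n - 1) → V := fun i => ((P i).tail.head?).getD t with hf
    have hfmem : ∀ i, (t, f i) ∈ pathArcs (P i) := fun i =>
      first_arc (hhead i) (hlast i) htr'
    have hfinj : Function.Injective f := by
      intro i j hij
      by_contra hne
      exact hdisj i j hne (t, f i) (hfmem i) (by rw [hij]; exact hfmem j)
    have hsub : Finset.univ.image f ⊆ Finset.univ.erase t := by
      intro v hv
      obtain ⟨i, _, rfl⟩ := Finset.mem_image.mp hv
      exact Finset.mem_erase.mpr ⟨ne_of_gt (hlt i _ (hfmem i)), Finset.mem_univ _⟩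
    have hceq : Finset.univ.image f = Finset.univ.erase t := by
      apply Finset.eq_of_subset_of_card_le hsub
      rw [Finset.card_image_of_injective _ hfinj, Finset.card_univ, hcardFin,
        Finset.card_erase_of_mem (Finset.mem_univ t), Finset.card_univ, hcard]
    intro v hv
    have : v ∈ Finset.univ.image f := by
      rw [hceq]; exact Finset.mem_erase.mpr ⟨hv, Finset.mem_univ _⟩
    obtain ⟨i, _, rfl⟩ := Finset.mem_image.mp this
    rw [hA, Finset.mem_biUnion]
    exact ⟨i, Finset.mem_univ _, List.mem_toFinset.mpr (hfmem i)⟩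
  -- surjectivity of last arcs
  have hrA : ∀ v : V, v ≠ r → (v, r) ∈ A := by
    set g : Fin (n - 1) → V := fun i => ((P i).dropLast.getLast?).getD r with hg
    have hgmem : ∀ i, (g i, r) ∈ pathArcs (P i) := fun i =>
      last_arc (hhead i) (hlast i) htr'
    have hginj : Function.Injective g := by
      intro i j hij
      by_contra hne
      exact hdisj i j hne (g i, r) (hgmem i) (by rw [hij]; exact hgmem j)
    have hsub : Finset.univ.image g ⊆ Finset.univ.erase r := by
      intro v hv
      obtain ⟨i, _, rfl⟩ := Finset.mem_image.mp hv
      exact Finset.mem_erase.mpr ⟨ne_of_lt (hlt i _ (hgmem i)), Finset.mem_univ _⟩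
    have hceq : Finset.univ.image g = Finset.univ.erase r := by
      apply Finset.eq_of_subset_of_card_le hsub
      rw [Finset.card_image_of_injective _ hginj, Finset.card_univ, hcardFin,
        Finset.card_erase_of_mem (Finset.mem_univ r), Finset.card_univ, hcard]
    intro v hv
    have : v ∈ Finset.univ.image g := by
      rw [hceq]; exact Finset.mem_erase.mpr ⟨hv, Finset.mem_univ _⟩
    obtain ⟨i, _, rfl⟩ := Finset.mem_image.mp this
    rw [hA, Finset.mem_biUnion]
    exact ⟨i, Finset.mem_univ _, List.mem_toFinset.mpr (hgmem i)⟩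
  -- internal arcs
  set Aint : Finset (V × V) := A.filter (fun p => p.1 ≠ t ∧ p.2 ≠ r) with hAint
  -- degree balance
  have hbal : ∀ v : V, (Aint.filter (fun p => p.2 = v)).card
      = (Aint.filter (fun p => p.1 = v)).card := by
    intro v
    rcases eq_or_ne v t with rfl | hvt
    · rw [Finset.filter_eq_empty_iff.mpr, Finset.filter_eq_empty_iff.mpr]
      · rintro p hp
        exact (Finset.mem_filter.mp hp).2.1
      · intro p hp h2
        have := hAlt p (Finset.mem_filter.mp hp).1
        rw [h2] at this
        exact absurd (ht p.1) (not_le_of_gt this)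
    rcases eq_or_ne v r with rfl | hvr
    · rw [Finset.filter_eq_empty_iff.mpr, Finset.filter_eq_empty_iff.mpr]
      · intro p hp h1
        have := hAlt p (Finset.mem_filter.mp hp).1
        rw [h1] at this
        exact absurd (hr p.2) (not_le_of_gt this)
      · rintro p hp
        exact fun h => (Finset.mem_filter.mp hp).2.2 h
    -- interior vertex
    have hA2 : (A.filter (fun p => p.2 = v)).card = ∑ i, (P i).count v := by
      rw [key _ inferInstance]
      exact Finset.sum_congr rfl fun i _ => by
        rw [card_filter_snd (hnodup i), count_tail (hhead i) hvt]
    have hA1 : (A.filter (fun p => p.1 = v)).card = ∑ i, (P i).count v := by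
      rw [key _ inferInstance]
      exact Finset.sum_congr rfl fun i _ => by
        rw [card_filter_fst (hnodup i), count_dropLast (hlast i) hvr]
    have hins2 : A.filter (fun p => p.2 = v)
        = insert (t, v) (Aint.filter (fun p => p.2 = v)) := by
      ext p
      simp only [Finset.mem_filter, Finset.mem_insert, hAint]
      constructor
      · rintro ⟨hpA, hp2⟩
        rcases eq_or_ne p.1 t with h1 | h1
        · left; exact Prod.ext h1 hp2
        · right; exact ⟨⟨hpA, h1, hp2 ▸ hvr⟩, hp2⟩
      · rintro (rfl | ⟨⟨hpA, _⟩, hp2⟩)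
        · exact ⟨htA v hvt, rfl⟩
        · exact ⟨hpA, hp2⟩
    have hins1 : A.filter (fun p => p.1 = v)
        = insert (v, r) (Aint.filter (fun p => p.1 = v)) := by
      ext p
      simp only [Finset.mem_filter, Finset.mem_insert, hAint]
      constructor
      · rintro ⟨hpA, hp1⟩
        rcases eq_or_ne p.2 r with h2 | h2
        · left; exact Prod.ext hp1 h2
        · right; exact ⟨⟨hpA, hp1 ▸ hvt, h2⟩, hp1⟩
      · rintro (rfl | ⟨⟨hpA, _⟩, hp1⟩)
        · exact ⟨hrA v hvr, rfl⟩
        · exact ⟨hpA, hp1⟩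
    have hn2 : (t, v) ∉ Aint.filter (fun p => p.2 = v) := by
      simp only [Finset.mem_filter, hAint]
      rintro ⟨⟨_, h, _⟩, _⟩
      exact h rfl
    have hn1 : (v, r) ∉ Aint.filter (fun p => p.1 = v) := by
      simp only [Finset.mem_filter, hAint]
      rintro ⟨⟨_, _, h⟩, _⟩
      exact h rfl
    have e2 := Finset.card_insert_of_notMem hn2
    have e1 := Finset.card_insert_of_notMem hn1
    rw [← hins2] at e2
    rw [← hins1] at e1
    omega
  -- internal arcs are empty
  have hAint_empty : Aint = ∅ := by
    by_contra hne
    obtain ⟨p0, hp0⟩ := Finset.nonempty_of_ne_empty hne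
    have himg : (Aint.image Prod.snd).Nonempty := ⟨p0.2, Finset.mem_image_of_mem _ hp0⟩
    set v := (Aint.image Prod.snd).max' himg with hv
    obtain ⟨p1, hp1, hp1v⟩ := Finset.mem_image.mp ((Aint.image Prod.snd).max'_mem himg)
    have h2 : (Aint.filter (fun p => p.2 = v)).Nonempty := ⟨p1, Finset.mem_filter.mpr ⟨hp1, hp1v⟩⟩
    have h1 : (Aint.filter (fun p => p.1 = v)).Nonempty := by
      rw [← Finset.card_pos, ← hbal, Finset.card_pos]
      exact h2
    obtain ⟨q, hq⟩ := h1
    obtain ⟨hqA, hq1⟩ := Finset.mem_filter.mp hq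
    have hlt' : v < q.2 := hq1 ▸ hAlt q (Finset.mem_filter.mp hqA).1
    have : q.2 ≤ v := Finset.le_max' _ _ (Finset.mem_image_of_mem _ hqA)
    exact absurd hlt' (not_lt_of_ge this)
  -- A equals the star arcs
  set S : Finset (V × V) := Finset.univ.filter
    (fun p : V × V => p.1 < p.2 ∧ (p.1 = t ∨ p.2 = r)) with hS
  have hAS : A = S := by
    ext p
    rw [hS, Finset.mem_filter]
    constructor
    · intro hp
      refine ⟨Finset.mem_univ _, hAlt p hp, ?_⟩
      by_contra hcon
      push_neg at hcon
      have : p ∈ Aint := Finset.mem_filter.mpr ⟨hp, hcon.1, hcon.2⟩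
      rw [hAint_empty] at this
      exact absurd this (Finset.notMem_empty _)
    · rintro ⟨-, hplt, (h1 | h2)⟩
      · have : p = (t, p.2) := Prod.ext h1 rfl
        rw [this]
        exact htA p.2 (ne_of_gt (h1 ▸ hplt))
      · have : p = (p.1, r) := Prod.ext rfl h2
        rw [this]
        exact hrA p.1 (ne_of_lt (h2 ▸ hplt))
  -- cardinality of S
  have hScard : S.card = 2 * n - 3 := by
    set S1 : Finset (V × V) := Finset.univ.filter (fun p : V × V => p.1 = t ∧ p.1 < p.2) with hS1
    set S2 : Finset (V × V) := Finset.univ.filter (fun p : V × V => p.2 = r ∧ p.1 < p.2) with hS2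
    have hS1card : S1.card = n - 1 := by
      rw [← hcard, ← Finset.card_univ, ← Finset.card_erase_of_mem (Finset.mem_univ t)]
      refine Finset.card_bij' (fun p _ => p.2) (fun v _ => (t, v)) ?_ ?_ ?_ ?_
      · intro p hp
        obtain ⟨-, h1, h2⟩ := Finset.mem_filter.mp hp
        exact Finset.mem_erase.mpr ⟨ne_of_gt (h1 ▸ h2), Finset.mem_univ _⟩
      · intro v hv
        obtain ⟨hne, -⟩ := Finset.mem_erase.mp hv
        exact Finset.mem_filter.mpr ⟨Finset.mem_univ _, rfl, lt_of_le_of_ne (ht v) (Ne.symm hne)⟩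
      · intro p hp
        obtain ⟨-, h1, -⟩ := Finset.mem_filter.mp hp
        exact Prod.ext h1.symm rfl
      · intro v _
        rfl
    have hS2card : S2.card = n - 1 := by
      rw [← hcard, ← Finset.card_univ, ← Finset.card_erase_of_mem (Finset.mem_univ r)]
      refine Finset.card_bij' (fun p _ => p.1) (fun v _ => (v, r)) ?_ ?_ ?_ ?_
      · intro p hp
        obtain ⟨-, h1, h2⟩ := Finset.mem_filter.mp hp
        exact Finset.mem_erase.mpr ⟨ne_of_lt (h1 ▸ h2), Finset.mem_univ _⟩
      · intro v hv
        obtain ⟨hne, -⟩ := Finset.mem_erase.mp hv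
        exact Finset.mem_filter.mpr ⟨Finset.mem_univ _, rfl, lt_of_le_of_ne (hr v) hne⟩
      · intro p hp
        obtain ⟨-, h1, -⟩ := Finset.mem_filter.mp hp
        exact Prod.ext rfl h1.symm
      · intro v _
        rfl
    have hunion : S = S1 ∪ S2 := by
      ext p
      simp only [hS, hS1, hS2, Finset.mem_union, Finset.mem_filter, Finset.mem_univ, true_and]
      tauto
    have hinter : S1 ∩ S2 = {(t, r)} := by
      ext p
      simp only [hS1, hS2, Finset.mem_inter, Finset.mem_filter, Finset.mem_univ, true_and,
        Finset.mem_singleton]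
      constructor
      · rintro ⟨⟨h1, -⟩, ⟨h2, -⟩⟩
        exact Prod.ext h1 h2
      · rintro rfl
        exact ⟨⟨rfl, htr⟩, ⟨rfl, htr⟩⟩
    have := Finset.card_union_add_card_inter S1 S2
    rw [hinter, Finset.card_singleton, hS1card, hS2card] at this
    rw [hunion]
    omega
  -- cardinality of all arcs
  have hTcard : 2 * (Finset.univ.filter (fun p : V × V => p.1 < p.2)).card + n = n * n := by
    have huniv : (Finset.univ : Finset (V × V)).card = n * n := by
      rw [Finset.card_univ, Fintype.card_prod, hcard]
    have hsplit := Finset.card_filter_add_card_filter_not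
      (s := (Finset.univ : Finset (V × V))) (p := fun p : V × V => p.1 < p.2)
    have hgt : (Finset.univ.filter (fun p : V × V => p.1 < p.2)).card
        = (Finset.univ.filter (fun p : V × V => p.2 < p.1)).card := by
      refine Finset.card_bij' (fun p _ => (p.2, p.1)) (fun p _ => (p.2, p.1)) ?_ ?_ ?_ ?_
      · intro p hp
        exact Finset.mem_filter.mpr ⟨Finset.mem_univ _, (Finset.mem_filter.mp hp).2⟩
      · intro p hp
        exact Finset.mem_filter.mpr ⟨Finset.mem_univ _, (Finset.mem_filter.mp hp).2⟩
      · intro p _; rfl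
      · intro p _; rfl
    have hdiag : (Finset.univ.filter (fun p : V × V => p.1 = p.2)).card = n := by
      rw [← hcard, ← Finset.card_univ]
      refine Finset.card_bij' (fun p _ => p.1) (fun v _ => (v, v)) ?_ ?_ ?_ ?_
      · intro p _; exact Finset.mem_univ _
      · intro v _
        exact Finset.mem_filter.mpr ⟨Finset.mem_univ _, rfl⟩
      · intro p hp
        exact Prod.ext rfl ((Finset.mem_filter.mp hp).2)
      · intro v _; rfl
    have hnegeq : Finset.univ.filter (fun p : V × V => ¬ p.1 < p.2)
        = Finset.univ.filter (fun p : V × V => p.2 < p.1)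
          ∪ Finset.univ.filter (fun p : V × V => p.1 = p.2) := by
      ext p
      simp only [Finset.mem_union, Finset.mem_filter, Finset.mem_univ, true_and, not_lt]
      rw [le_iff_lt_or_eq]
      constructor
      · rintro (h | h)
        · exact Or.inl h
        · exact Or.inr h.symm
      · rintro (h | h)
        · exact Or.inl h
        · exact Or.inr h.symm
    have hdisj2 : Disjoint (Finset.univ.filter (fun p : V × V => p.2 < p.1))
        (Finset.univ.filter (fun p : V × V => p.1 = p.2)) := by
      rw [Finset.disjoint_left]
      intro p hp1 hp2
      have h1 := (Finset.mem_filter.mp hp1).2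
      have h2 := (Finset.mem_filter.mp hp2).2
      exact absurd h1 (h2 ▸ lt_irrefl _)
    rw [hnegeq, Finset.card_union_of_disjoint hdisj2, hdiag, huniv] at hsplit
    omega
  -- final computation
  have hsub : A ⊆ Finset.univ.filter (fun p : V × V => p.1 < p.2) :=
    fun p hp => Finset.mem_filter.mpr ⟨Finset.mem_univ _, hAlt p hp⟩
  rw [Finset.card_sdiff_of_subset hsub, hAS, hScard]
  obtain ⟨k, rfl⟩ : ∃ k, n = k + 2 := ⟨n - 2, by omega⟩
  rcases k with _ | j
  · simp only [Nat.add_sub_cancel] at *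
    omega
  · have hq : (j + 1 + 2) * (j + 1 + 2) = (j + 1) * j + 5 * j + 9 := by ring
    have h2 : j + 1 + 2 - 2 = j + 1 := by omega
    have h3 : j + 1 + 2 - 3 = j := by omega
    rw [h2, h3]
    have heven : Even ((j + 1) * j) := by
      rw [Nat.mul_comm]; exact Nat.even_mul_succ_self j
    obtain ⟨c, hc⟩ := heven
    omega
end
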